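/- For real t > 1 and real y ≥ 1, ∑_{n ≤ t/y, |2πny − t| > t^(1/3)} |( (2πny)² − t² )|^(-1/2) ≪ (1 + log(ty))/y + t^(-2/3). -/

import Mathlib

open Real Finset

lemma rpow_neg_half (x : ℝ) (hx : 0 ≤ x) : x ^ (-(1/2):ℝ) = (Real.sqrt x)⁻¹ := by
  rw [Real.rpow_neg hx, Real.sqrt_eq_rpow]

lemma aux_sum_comp (s t : Finset ℕ) (i : ℕ → ℕ) (f : ℕ → ℝ)
    (h0 : ∀ j ∈ t, 0 ≤ f j) (hmem : ∀ n ∈ s, i n ∈ t)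
    (hinj : ∀ n ∈ s, ∀ m ∈ s, i n = i m → n = m) :
    ∑ n ∈ s, f (i n) ≤ ∑ j ∈ t, f j := by
  rw [← Finset.sum_image hinj]
  apply Finset.sum_le_sum_of_subset_of_nonneg
  · intro j hj
    simp only [Finset.mem_image] at hj
    obtain ⟨n, hn, rfl⟩ := hj
    exact hmem n hn
  · intro j hj _; exact h0 j hj

lemma aux_sqrt_sum (N : ℕ) : ∑ j ∈ Icc 1 N, (j:ℝ) ^ (-(1/2):ℝ) ≤ 2 * Real.sqrt N := by
  induction N with
  | zero => simp
  | succ N ih =>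
    have hins : Icc 1 (N+1) = insert (N+1) (Icc 1 N) := by
      ext x; simp only [Finset.mem_Icc, Finset.mem_insert]; omega
    rw [hins, Finset.sum_insert (by simp)]
    have hs1 : Real.sqrt ((N:ℝ)+1) ^ 2 = (N:ℝ)+1 := Real.sq_sqrt (by positivity)
    have hs2 : Real.sqrt (N:ℝ) ^ 2 = (N:ℝ) := Real.sq_sqrt (by positivity)
    have hp1 : 0 < Real.sqrt ((N:ℝ)+1) := Real.sqrt_pos.2 (by positivity)
    have hp2 : 0 ≤ Real.sqrt (N:ℝ) := Real.sqrt_nonneg _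
    have h1 : ((N+1:ℕ):ℝ) ^ (-(1/2):ℝ) = (Real.sqrt ((N:ℝ)+1))⁻¹ := by
      rw [rpow_neg_half _ (by positivity)]; push_cast; ring_nf
    have hcast : Real.sqrt ((N+1:ℕ):ℝ) = Real.sqrt ((N:ℝ)+1) := by push_cast; ring_nf
    rw [h1, hcast]
    have key : (Real.sqrt ((N:ℝ)+1))⁻¹ ≤ 2 * Real.sqrt ((N:ℝ)+1) - 2 * Real.sqrt (N:ℝ) := by
      rw [inv_le_iff_one_le_mul₀ hp1]
      nlinarith [sq_nonneg (Real.sqrt ((N:ℝ)+1) - Real.sqrt (N:ℝ))]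
    linarith [ih]

lemma aux_two_sided (N k : ℕ) (hk : k ≤ N) :
    ∑ n ∈ (Icc 1 N).filter (fun n => ¬ n = k), |(n:ℝ) - k| ^ (-(1/2):ℝ)
      ≤ 2 * ∑ j ∈ Icc 1 N, (j:ℝ) ^ (-(1/2):ℝ) := by
  have hnn : ∀ j ∈ Icc 1 N, 0 ≤ (j:ℝ) ^ (-(1/2):ℝ) := fun j _ => by positivity
  rw [← Finset.sum_filter_add_sum_filter_not ((Icc 1 N).filter (fun n => ¬ n = k)) (fun n => n < k)]
  have hA : ∑ n ∈ ((Icc 1 N).filter (fun n => ¬ n = k)).filter (fun n => n < k),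
      |(n:ℝ) - k| ^ (-(1/2):ℝ) ≤ ∑ j ∈ Icc 1 N, (j:ℝ) ^ (-(1/2):ℝ) := by
    have := aux_sum_comp (((Icc 1 N).filter (fun n => ¬ n = k)).filter (fun n => n < k))
      (Icc 1 N) (fun n => k - n) (fun j => (j:ℝ) ^ (-(1/2):ℝ)) hnn
      (by intro n hn; simp only [Finset.mem_filter, Finset.mem_Icc] at hn ⊢; omega)
      (by intro n hn m hm h; simp only [Finset.mem_filter, Finset.mem_Icc] at hn hm; omega)
    refine le_trans (le_of_eq ?_) this
    apply Finset.sum_congr rfl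
    intro n hn
    simp only [Finset.mem_filter, Finset.mem_Icc] at hn
    congr 1
    rw [abs_of_nonpos (by push_cast [Nat.cast_le]; simp; omega)]
    push_cast [Nat.cast_sub (le_of_lt hn.2)]
    ring
  have hB : ∑ n ∈ ((Icc 1 N).filter (fun n => ¬ n = k)).filter (fun n => ¬ n < k),
      |(n:ℝ) - k| ^ (-(1/2):ℝ) ≤ ∑ j ∈ Icc 1 N, (j:ℝ) ^ (-(1/2):ℝ) := by
    have := aux_sum_comp (((Icc 1 N).filter (fun n => ¬ n = k)).filter (fun n => ¬ n < k))
      (Icc 1 N) (fun n => n - k) (fun j => (j:ℝ) ^ (-(1/2):ℝ)) hnn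
      (by intro n hn; simp only [Finset.mem_filter, Finset.mem_Icc] at hn ⊢; omega)
      (by intro n hn m hm h; simp only [Finset.mem_filter, Finset.mem_Icc] at hn hm; omega)
    refine le_trans (le_of_eq ?_) this
    apply Finset.sum_congr rfl
    intro n hn
    simp only [Finset.mem_filter, Finset.mem_Icc, not_lt] at hn
    congr 1
    rw [abs_of_nonneg (by push_cast; simp; exact_mod_cast hn.2)]
    push_cast [Nat.cast_sub hn.2]
    ring
  linarith

set_option maxHeartbeats 1000000 in
theorem bessel_tail_sum :
    ∃ K : ℝ, 0 < K ∧
      ∀ (t y : ℝ), 1 < t → 1 ≤ y →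
      ∑ n ∈ (Finset.Icc 1 ⌊t / y⌋₊).filter
          (fun n : ℕ => t ^ ((1 : ℝ) / 3) < |2 * π * (n : ℝ) * y - t|),
          |(2 * π * (n : ℝ) * y) ^ 2 - t ^ 2| ^ (-(1 / 2) : ℝ)
        ≤ K * ((1 + Real.log (t * y)) / y + t ^ (-(2 / 3) : ℝ)) := by
  refine ⟨3, by norm_num, ?_⟩
  intro t y ht hy
  have ht0 : (0:ℝ) < t := by linarith
  have hy0 : (0:ℝ) < y := by linarith
  have hπ : (0:ℝ) < π := Real.pi_pos
  have hL : 0 ≤ Real.log (t * y) := Real.log_nonneg (by nlinarith)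
  have hT : (0:ℝ) ≤ t ^ (-(2/3):ℝ) := le_of_lt (Real.rpow_pos_of_pos ht0 _)
  have hRHS : 0 ≤ (1 + Real.log (t * y)) / y + t ^ (-(2/3):ℝ) := by
    have : 0 ≤ (1 + Real.log (t * y)) / y := by positivity
    linarith
  set N := ⌊t / y⌋₊ with hNdef
  by_cases hN0 : N = 0
  · rw [hN0]
    simp only [Finset.Icc_self, show Finset.Icc 1 0 = (∅ : Finset ℕ) by rfl]
    simp only [Finset.filter_empty, Finset.sum_empty]
    linarith
  · have hN1 : 1 ≤ N := Nat.one_le_iff_ne_zero.2 hN0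
    have htyd : (1:ℝ) ≤ t / y := by
      exact_mod_cast (Nat.le_floor_iff (by positivity : (0:ℝ) ≤ t / y)).mp hN1
    have hyt : y ≤ t := (one_le_div hy0).mp htyd
    set x := t / (2 * π * y) with hxdef
    have hx0 : 0 < x := by positivity
    set k := ⌊x + 1/2⌋₊ with hkdef
    have hk1 : (k:ℝ) ≤ x + 1/2 := Nat.floor_le (by positivity)
    have hk2 : x + 1/2 < (k:ℝ) + 1 := Nat.lt_floor_add_one _
    have hkx : |(k:ℝ) - x| ≤ 1/2 := abs_le.2 ⟨by linarith, by linarith⟩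
    have hkN : k ≤ N := by
      apply Nat.le_floor
      have hx_le : x ≤ t / (2 * y) := by
        rw [hxdef, div_le_div_iff₀ (by positivity) (by positivity)]
        nlinarith [Real.pi_gt_three, mul_pos ht0 hy0]
      have : (1:ℝ)/2 ≤ t/(2*y) := by
        rw [div_le_div_iff₀ (by positivity) (by positivity)]
        nlinarith
      have : (k:ℝ) ≤ t/(2*y) + t/(2*y) := by linarith
      calc (k:ℝ) ≤ t/(2*y) + t/(2*y) := this
        _ = t / y := by ring
    set C := (t * (π * y)) ^ (-(1/2):ℝ) with hCdef
    have hC0 : 0 ≤ C := le_of_lt (Real.rpow_pos_of_pos (by positivity) _)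
    set g : ℕ → ℝ := fun n =>
      if n = k then t ^ (-(2/3):ℝ) else C * |(n:ℝ) - k| ^ (-(1/2):ℝ) with hgdef
    have hg0 : ∀ n, 0 ≤ g n := by
      intro n
      simp only [hgdef]
      split
      · exact hT
      · positivity
    set S := (Finset.Icc 1 N).filter
        (fun n : ℕ => t ^ ((1 : ℝ) / 3) < |2 * π * (n : ℝ) * y - t|) with hSdef
    have step1 : ∑ n ∈ S, |(2 * π * (n : ℝ) * y) ^ 2 - t ^ 2| ^ (-(1 / 2) : ℝ)
        ≤ ∑ n ∈ S, g n := by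
      apply Finset.sum_le_sum
      intro n hn
      simp only [hSdef, Finset.mem_filter, Finset.mem_Icc] at hn
      obtain ⟨⟨hn1, hn2⟩, hnd⟩ := hn
      set d := |2 * π * (n:ℝ) * y - t| with hddef
      have hd_pos : 0 < d := lt_trans (Real.rpow_pos_of_pos ht0 _) hnd
      have hA : t * d ≤ |(2 * π * (n : ℝ) * y) ^ 2 - t ^ 2| := by
        have hfact : (2*π*(n:ℝ)*y)^2 - t^2 = (2*π*(n:ℝ)*y - t) * (2*π*(n:ℝ)*y + t) := by
          ring
        rw [hfact, abs_mul]
        have hsum : |2*π*(n:ℝ)*y + t| = 2*π*(n:ℝ)*y + t := by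
          apply abs_of_nonneg
          have : (0:ℝ) ≤ (n:ℝ) := Nat.cast_nonneg n
          positivity
        rw [hsum]
        have : t ≤ 2*π*(n:ℝ)*y + t := by
          have hn0 : (0:ℝ) ≤ (n:ℝ) := Nat.cast_nonneg n
          have : (0:ℝ) ≤ 2*π*(n:ℝ)*y := by positivity
          linarith
        calc t * d ≤ (2*π*(n:ℝ)*y + t) * d := by nlinarith
          _ = d * (2*π*(n:ℝ)*y + t) := by ring
      have hstep : |(2 * π * (n : ℝ) * y) ^ 2 - t ^ 2| ^ (-(1 / 2) : ℝ)
          ≤ (t * d) ^ (-(1/2):ℝ) :=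
        Real.rpow_le_rpow_of_nonpos (by positivity) hA (by norm_num)
      by_cases hne : n = k
      · have hgval : g n = t ^ (-(2/3):ℝ) := by simp only [hgdef]; rw [if_pos hne]
        rw [hgval]
        refine le_trans hstep ?_
        have h1 : t * t ^ ((1:ℝ)/3) ≤ t * d := by nlinarith [le_of_lt hnd]
        have h2 : (t * d) ^ (-(1/2):ℝ) ≤ (t * t ^ ((1:ℝ)/3)) ^ (-(1/2):ℝ) :=
          Real.rpow_le_rpow_of_nonpos (by positivity) h1 (by norm_num)
        refine le_trans h2 (le_of_eq ?_)
        rw [show t * t ^ ((1:ℝ)/3) = t ^ ((4:ℝ)/3) by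
          rw [show (4:ℝ)/3 = 1 + 1/3 by norm_num, Real.rpow_add ht0, Real.rpow_one]]
        rw [← Real.rpow_mul (le_of_lt ht0)]
        norm_num
      · have hgval : g n = C * |(n:ℝ) - k| ^ (-(1/2):ℝ) := by
          simp only [hgdef]; rw [if_neg hne]
        rw [hgval]
        have hnk1 : (1:ℝ) ≤ |(n:ℝ) - k| := by
          rcases lt_or_gt_of_ne hne with h | h
          · have h' : (n:ℝ) + 1 ≤ k := by exact_mod_cast h
            rw [abs_of_nonpos (by linarith)]
            linarith
          · have h' : (k:ℝ) + 1 ≤ n := by exact_mod_cast h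
            rw [abs_of_nonneg (by linarith)]
            linarith
        have hd_eq : 2 * π * (n:ℝ) * y - t = 2 * π * y * ((n:ℝ) - x) := by
          rw [hxdef]
          field_simp
        have hd_val : d = 2 * π * y * |(n:ℝ) - x| := by
          rw [hddef, hd_eq, abs_mul, abs_of_nonneg (by positivity : (0:ℝ) ≤ 2*π*y)]
        have htri : |(n:ℝ) - k| ≤ |(n:ℝ) - x| + |(k:ℝ) - x| := by
          have := abs_sub_le ((n:ℝ)) x (k:ℝ)
          rw [abs_sub_comm x (k:ℝ)] at this
          exact this
        have hnx : |(n:ℝ) - k| / 2 ≤ |(n:ℝ) - x| := by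
          have : |(n:ℝ) - k| - 1/2 ≤ |(n:ℝ) - x| := by linarith
          linarith
        have hd_ge : π * y * |(n:ℝ) - k| ≤ d := by
          rw [hd_val]
          nlinarith [abs_nonneg ((n:ℝ) - k)]
        have hAge : t * (π * y * |(n:ℝ) - k|) ≤ t * d := by nlinarith
        have h3 : (t * d) ^ (-(1/2):ℝ) ≤ (t * (π * y * |(n:ℝ) - k|)) ^ (-(1/2):ℝ) :=
          Real.rpow_le_rpow_of_nonpos (by positivity) hAge (by norm_num)
        refine le_trans hstep (le_trans h3 (le_of_eq ?_))
        rw [show t * (π * y * |(n:ℝ) - k|) = (t * (π * y)) * |(n:ℝ) - k| by ring]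
        rw [Real.mul_rpow (by positivity) (abs_nonneg _)]
    have step2 : ∑ n ∈ S, g n ≤ ∑ n ∈ Finset.Icc 1 N, g n := by
      apply Finset.sum_le_sum_of_subset_of_nonneg (Finset.filter_subset _ _)
      intro n _ _
      exact hg0 n
    have step3 : ∑ n ∈ Finset.Icc 1 N, g n
        ≤ t ^ (-(2/3):ℝ) + C * ∑ n ∈ (Finset.Icc 1 N).filter (fun n => ¬ n = k),
            |(n:ℝ) - k| ^ (-(1/2):ℝ) := by
      rw [← Finset.sum_filter_add_sum_filter_not (Finset.Icc 1 N) (fun n => n = k)]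
      have hA1 : ∑ n ∈ (Finset.Icc 1 N).filter (fun n => n = k), g n ≤ t ^ (-(2/3):ℝ) := by
        have hsub : (Finset.Icc 1 N).filter (fun n => n = k) ⊆ {k} := by
          intro n hn
          simp only [Finset.mem_filter] at hn
          simp [hn.2]
        have heq : ∀ n ∈ (Finset.Icc 1 N).filter (fun n => n = k), g n = t ^ (-(2/3):ℝ) := by
          intro n hn
          simp only [Finset.mem_filter] at hn
          simp [hgdef, hn.2]
        rw [Finset.sum_congr rfl heq, Finset.sum_const]
        have hcard : ((Finset.Icc 1 N).filter (fun n => n = k)).card ≤ 1 := by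
          have := Finset.card_le_card hsub
          simpa using this
        calc ((Finset.Icc 1 N).filter (fun n => n = k)).card • t ^ (-(2/3):ℝ)
            = (((Finset.Icc 1 N).filter (fun n => n = k)).card : ℝ) * t ^ (-(2/3):ℝ) := by
              rw [nsmul_eq_mul]
          _ ≤ 1 * t ^ (-(2/3):ℝ) := by
              apply mul_le_mul_of_nonneg_right _ hT
              exact_mod_cast hcard
          _ = t ^ (-(2/3):ℝ) := one_mul _
      have hB1 : ∑ n ∈ (Finset.Icc 1 N).filter (fun n => ¬ n = k), g n
          = C * ∑ n ∈ (Finset.Icc 1 N).filter (fun n => ¬ n = k),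
              |(n:ℝ) - k| ^ (-(1/2):ℝ) := by
        rw [Finset.mul_sum]
        apply Finset.sum_congr rfl
        intro n hn
        simp only [Finset.mem_filter] at hn
        simp [hgdef, hn.2]
      linarith [hA1, le_of_eq hB1]
    have step4 : ∑ n ∈ (Finset.Icc 1 N).filter (fun n => ¬ n = k),
        |(n:ℝ) - k| ^ (-(1/2):ℝ) ≤ 2 * (2 * Real.sqrt (t/y)) := by
      refine le_trans (aux_two_sided N k hkN) ?_
      have h5 := aux_sqrt_sum N
      have h6 : Real.sqrt (N:ℝ) ≤ Real.sqrt (t/y) :=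
        Real.sqrt_le_sqrt (Nat.floor_le (by positivity))
      nlinarith
    have hCsum : C * (2 * (2 * Real.sqrt (t/y))) = 4 / (Real.sqrt π * y) := by
      set a := Real.sqrt t with hadef
      set b := Real.sqrt y with hbdef
      set c := Real.sqrt π with hcdef
      have ha0 : 0 < a := Real.sqrt_pos.2 ht0
      have hb0 : 0 < b := Real.sqrt_pos.2 hy0
      have hc0 : 0 < c := Real.sqrt_pos.2 hπ
      have hb2 : b^2 = y := Real.sq_sqrt (le_of_lt hy0)
      have hCval : C = (a * (c * b))⁻¹ := by
        rw [hCdef, rpow_neg_half _ (by positivity)]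
        have hsq1 : Real.sqrt (t * (π * y)) = a * (c * b) := by
          rw [hadef, hcdef, hbdef, ← Real.sqrt_mul (le_of_lt hπ) y,
            ← Real.sqrt_mul (le_of_lt ht0)]
        rw [hsq1]
      have hsq : Real.sqrt (t/y) = a / b := by
        rw [hadef, hbdef, Real.sqrt_div (le_of_lt ht0) y]
      have hmain : (a * (c * b))⁻¹ * (2 * (2 * (a / b))) = 4 / (c * b^2) := by
        field_simp
        ring
      rw [hCval, hsq, hmain, hb2]
    have hc4 : 4 / (Real.sqrt π * y) ≤ 3 / y := by
      have hc0 : 0 < Real.sqrt π := Real.sqrt_pos.2 hπ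
      rw [div_le_div_iff₀ (by positivity) hy0]
      have h34 : 4 ≤ 3 * Real.sqrt π := by
        nlinarith [Real.sq_sqrt (le_of_lt hπ), Real.pi_gt_three]
      nlinarith
    have h8 : 3 / y ≤ 3 * (1 + Real.log (t * y)) / y := by
      gcongr
      linarith
    calc ∑ n ∈ S, |(2 * π * (n : ℝ) * y) ^ 2 - t ^ 2| ^ (-(1 / 2) : ℝ)
        ≤ ∑ n ∈ S, g n := step1
      _ ≤ ∑ n ∈ Finset.Icc 1 N, g n := step2
      _ ≤ t ^ (-(2/3):ℝ) + C * ∑ n ∈ (Finset.Icc 1 N).filter (fun n => ¬ n = k),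
            |(n:ℝ) - k| ^ (-(1/2):ℝ) := step3
      _ ≤ t ^ (-(2/3):ℝ) + C * (2 * (2 * Real.sqrt (t/y))) := by
          have := mul_le_mul_of_nonneg_left step4 hC0
          linarith
      _ = t ^ (-(2/3):ℝ) + 4 / (Real.sqrt π * y) := by rw [hCsum]
      _ ≤ 3 * ((1 + Real.log (t * y)) / y + t ^ (-(2 / 3) : ℝ)) := by
          have : 3 * ((1 + Real.log (t * y)) / y + t ^ (-(2 / 3) : ℝ))
              = 3 * (1 + Real.log (t * y)) / y + 3 * t ^ (-(2 / 3) : ℝ) := by ring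
          rw [this]
          linarith
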